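/- arXiv:2507.09333 — 2 statements merged into one kernel-verified Lean document; each statement's English description precedes it below -/
import Mathlib

section
/- Let E be a real normed vector space, T>0, γ ∈ (0,1) and α ∈ ((1−γ)/2, 1/2). Then there exists a constant C>0, depending only on α, γ and T, such that for every differentiable function f:(0,T)→E with ∫₀^T ‖f(t)‖² dt < ∞ and ∫₀^T t^{2−γ} ‖f′(t)‖² dt < ∞, one has ∫₀^T h^{2α−2} ( ∫₀^{T−h} ‖f(t+h) − f(t)‖² dt ) dh ≤ C ∫₀^T t^{2−γ} ‖f′(t)‖² dt. -/
open MeasureTheory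

set_option maxHeartbeats 2000000 in
/-- quantitative fractional Sobolev-in-time bound.  If
`f ∈ L²(0,T;E)` is differentiable on `(0,T)` with `t^{1-γ/2} f' ∈ L²(0,T;E)`,
then the `H^{1/2-α}(0,T;E)` Gagliardo seminorm of `f` is controlled by the
weighted norm of `f'`, with a constant depending only on `α`, `γ` and `T`. -/
theorem time_weighted_fractional_sobolev_bound
    {E : Type*} [NormedAddCommGroup E] [NormedSpace ℝ E]
    (T γ α : ℝ) (hT : 0 < T) (hγ : γ ∈ Set.Ioo (0:ℝ) 1)
    (hα : α ∈ Set.Ioo ((1 - γ) / 2) (1 / 2)) :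
    ∃ C > 0, ∀ f : ℝ → E,
      (∀ t ∈ Set.Ioo (0:ℝ) T, DifferentiableAt ℝ f t) →
      IntegrableOn (fun t => ‖f t‖ ^ 2) (Set.Ioo 0 T) →
      IntegrableOn (fun t => t ^ (2 - γ) * ‖deriv f t‖ ^ 2) (Set.Ioo 0 T) →
      (∫ h in Set.Ioo (0:ℝ) T,
          h ^ (2 * α - 2) * ∫ t in Set.Ioo (0:ℝ) (T - h), ‖f (t + h) - f t‖ ^ 2)
        ≤ C * ∫ t in Set.Ioo (0:ℝ) T, t ^ (2 - γ) * ‖deriv f t‖ ^ 2 := by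
  obtain ⟨hγ0, hγ1⟩ := hγ
  obtain ⟨hα1, hα2⟩ := hα
  have hβ : (0:ℝ) < 2 * α + γ - 1 := by nlinarith
  have hγγ : (0:ℝ) < γ * (1 - γ) := by nlinarith
  refine ⟨T ^ (2 * α + γ - 1) / (2 * α + γ - 1) * (1 / (γ * (1 - γ))),
    by positivity, ?_⟩
  intro f hdiff _ hgInt
  set A := ∫ t in Set.Ioo (0:ℝ) T, t ^ (2 - γ) * ‖deriv f t‖ ^ 2 with hAdef
  have hA0 : 0 ≤ A := by
    refine setIntegral_nonneg measurableSet_Ioo fun t ht => ?_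
    have : (0:ℝ) < t := ht.1
    positivity
  -- pass to the completion of `E`, where FTC and measurability of `deriv` hold
  let F := UniformSpace.Completion E
  let coeL : E →L[ℝ] F := UniformSpace.Completion.toComplL
  have hnorm : ∀ z : E, ‖coeL z‖ = ‖z‖ := fun z => by
    have : coeL z = (z : F) := congrFun UniformSpace.Completion.coe_toComplL z
    rw [this, UniformSpace.Completion.norm_coe]
  set g : ℝ → F := fun s => coeL (f s) with hgdef
  have hgder : ∀ x ∈ Set.Ioo (0:ℝ) T, HasDerivAt g (coeL (deriv f x)) x := fun x hx =>
    coeL.hasFDerivAt.comp_hasDerivAt x (hdiff x hx).hasDerivAt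
  set D : ℝ → F := deriv g with hDdef
  have hDeq : ∀ x ∈ Set.Ioo (0:ℝ) T, ‖D x‖ = ‖deriv f x‖ := fun x hx => by
    rw [hDdef, (hgder x hx).deriv, hnorm]
  -- core pointwise estimate
  have core : ∀ h ∈ Set.Ioo (0:ℝ) T, ∀ t ∈ Set.Ioo (0:ℝ) (T - h),
      ‖f (t + h) - f t‖ ^ 2 ≤ (t ^ (γ - 1) - (t + h) ^ (γ - 1)) / (1 - γ) * A := by
    intro h hh t ht
    obtain ⟨hh0, hhT⟩ := hh
    obtain ⟨ht0, htT⟩ := ht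
    have hle : t ≤ t + h := by linarith
    have hsub : Set.Icc t (t + h) ⊆ Set.Ioo 0 T := fun s hs =>
      ⟨lt_of_lt_of_le ht0 hs.1, lt_of_le_of_lt hs.2 (by linarith)⟩
    have hsub' : Set.Ioc t (t + h) ⊆ Set.Ioo 0 T :=
      Set.Ioc_subset_Icc_self.trans hsub
    have hgI : IntegrableOn (fun s => s ^ (2 - γ) * ‖D s‖ ^ 2)
        (Set.Ioc t (t + h)) := by
      refine (hgInt.mono_set hsub').congr_fun (fun s hs => ?_) measurableSet_Ioc
      rw [hDeq s (hsub' hs)]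
    -- integrability of D on the interval
    have hder_int : IntegrableOn D (Set.Ioc t (t + h)) := by
      refine Integrable.mono'
        (g := fun s => 1 + t ^ (γ - 2) * (s ^ (2 - γ) * ‖D s‖ ^ 2))
        ((integrable_const 1).add (hgI.const_mul _))
        (stronglyMeasurable_deriv g).aestronglyMeasurable ?_
      refine (ae_restrict_iff' measurableSet_Ioc).2 (.of_forall fun s hs => ?_)
      have hs0 : 0 < s := lt_trans ht0 hs.1
      have hts : t ≤ s := hs.1.le
      have h2 : t ^ (2 - γ) ≤ s ^ (2 - γ) :=
        Real.rpow_le_rpow ht0.le hts (by linarith)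
      have h4 : (0:ℝ) < t ^ (2 - γ) := Real.rpow_pos_of_pos ht0 _
      have h1c : (1:ℝ) ≤ t ^ (γ - 2) * s ^ (2 - γ) := by
        have h3 : t ^ (γ - 2) = (t ^ (2 - γ))⁻¹ := by
          rw [← Real.rpow_neg ht0.le]; norm_num
        rw [h3, inv_mul_eq_div, le_div_iff₀ h4, one_mul]
        exact h2
      set x := ‖D s‖ with hx
      have hx0 : 0 ≤ x := norm_nonneg _
      have hx1 : x ≤ 1 + x ^ 2 := by nlinarith [sq_nonneg (x - 1)]
      have h5 : x ^ 2 ≤ t ^ (γ - 2) * (s ^ (2 - γ) * x ^ 2) := by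
        rw [← mul_assoc]
        nlinarith [sq_nonneg x]
      calc ‖D s‖ = x := rfl
        _ ≤ 1 + x ^ 2 := hx1
        _ ≤ 1 + t ^ (γ - 2) * (s ^ (2 - γ) * x ^ 2) := by linarith
    have hder_ii : IntervalIntegrable D volume t (t + h) :=
      (intervalIntegrable_iff_integrableOn_Ioc_of_le hle).2 hder_int
    -- FTC
    have hftc : g (t + h) - g t = ∫ s in t..(t + h), D s :=
      (intervalIntegral.integral_eq_sub_of_hasDerivAt
        (fun x hx =>
          ((hgder x (hsub (by rwa [Set.uIcc_of_le hle] at hx))).differentiableAt).hasDerivAt)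
        hder_ii).symm
    have h1 : ‖f (t + h) - f t‖ ≤ ∫ s in t..(t + h), ‖D s‖ := by
      have e0 : ‖f (t + h) - f t‖ = ‖g (t + h) - g t‖ := by
        rw [hgdef]
        simp only [← map_sub]
        rw [hnorm]
      rw [e0, hftc]
      exact intervalIntegral.norm_integral_le_integral_norm hle
    -- Cauchy–Schwarz setup
    set u : ℝ → ℝ := fun s => s ^ ((γ - 2) / 2) with hu
    set v : ℝ → ℝ := fun s => s ^ ((2 - γ) / 2) * ‖D s‖ with hv
    set μ' := volume.restrict (Set.Ioc t (t + h)) with hμ'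
    have huv : ∫ s in t..(t + h), ‖D s‖ = ∫ s, u s * v s ∂μ' := by
      rw [intervalIntegral.integral_of_le hle]
      refine setIntegral_congr_fun measurableSet_Ioc fun s hs => ?_
      have hs0 : 0 < s := lt_trans ht0 hs.1
      simp only [u, v]
      rw [← mul_assoc, ← Real.rpow_add hs0,
        show (γ - 2) / 2 + (2 - γ) / 2 = 0 by ring, Real.rpow_zero, one_mul]
    have humeas : AEStronglyMeasurable u μ' :=
      (Measurable.aestronglyMeasurable (by fun_prop))
    have hvmeas : AEStronglyMeasurable v μ' := by
      refine Measurable.aestronglyMeasurable ?_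
      exact (by fun_prop : Measurable fun s : ℝ => s ^ ((2 - γ) / 2)).mul
        (stronglyMeasurable_deriv g).norm.measurable
    have hu2 : Integrable (fun s => u s ^ (2:ℕ)) μ' := by
      have hc : ContinuousOn (fun s : ℝ => u s ^ (2:ℕ)) (Set.Icc t (t + h)) := by
        refine ContinuousOn.pow (fun s hs => ?_) 2
        have hs0 : 0 < s := lt_of_lt_of_le ht0 hs.1
        exact (Real.continuousAt_rpow_const s _ (Or.inl hs0.ne')).continuousWithinAt
      exact (hc.integrableOn_Icc).mono_set Set.Ioc_subset_Icc_self
    have hv2 : Integrable (fun s => v s ^ (2:ℕ)) μ' := by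
      refine hgI.congr_fun (fun s hs => ?_) measurableSet_Ioc
      have hs0 : 0 < s := lt_trans ht0 hs.1
      simp only [v]
      rw [mul_pow, ← Real.rpow_natCast (s ^ ((2 - γ) / 2)) 2,
        ← Real.rpow_mul hs0.le]
      norm_num
    have huLp : MemLp u (ENNReal.ofReal 2) μ' := by
      rw [show ENNReal.ofReal 2 = 2 by norm_num]
      exact (memLp_two_iff_integrable_sq humeas).2 hu2
    have hvLp : MemLp v (ENNReal.ofReal 2) μ' := by
      rw [show ENNReal.ofReal 2 = 2 by norm_num]
      exact (memLp_two_iff_integrable_sq hvmeas).2 hv2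
    have hconj : Real.HolderConjugate 2 2 := Real.holderConjugate_iff.2 ⟨by norm_num, by norm_num⟩
    have hunn : 0 ≤ᵐ[μ'] u := by
      refine (ae_restrict_iff' measurableSet_Ioc).2 (.of_forall fun s hs => ?_)
      exact Real.rpow_nonneg (lt_trans ht0 hs.1).le _
    have hvnn : 0 ≤ᵐ[μ'] v := by
      refine (ae_restrict_iff' measurableSet_Ioc).2 (.of_forall fun s hs => ?_)
      exact mul_nonneg (Real.rpow_nonneg (lt_trans ht0 hs.1).le _) (norm_nonneg _)
    have hCS := integral_mul_le_Lp_mul_Lq_of_nonneg hconj hunn hvnn huLp hvLp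
    -- identify the two factors
    have hX : ∫ s, u s ^ (2:ℝ) ∂μ' = (t ^ (γ - 1) - (t + h) ^ (γ - 1)) / (1 - γ) := by
      have e1 : ∫ s, u s ^ (2:ℝ) ∂μ' = ∫ s in Set.Ioc t (t + h), s ^ (γ - 2) := by
        refine setIntegral_congr_fun measurableSet_Ioc fun s hs => ?_
        have hs0 : 0 < s := lt_trans ht0 hs.1
        simp only [u]
        rw [← Real.rpow_mul hs0.le]
        norm_num
      rw [e1, ← intervalIntegral.integral_of_le hle,
        integral_rpow (Or.inr ⟨by intro hc; nlinarith [sub_eq_iff_eq_add.mp hc],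
          by rw [Set.uIcc_of_le hle]; intro hc; exact absurd hc.1 (by linarith)⟩)]
      rw [show γ - 2 + 1 = γ - 1 by ring,
        div_eq_div_iff (by intro hc; nlinarith [sub_eq_zero.mp hc])
          (by intro hc; nlinarith [sub_eq_zero.mp hc])]
      ring
    have hY : ∫ s, v s ^ (2:ℝ) ∂μ' ≤ A := by
      have e2 : ∫ s, v s ^ (2:ℝ) ∂μ'
          = ∫ s in Set.Ioc t (t + h), s ^ (2 - γ) * ‖deriv f s‖ ^ 2 := by
        refine setIntegral_congr_fun measurableSet_Ioc fun s hs => ?_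
        have hs0 : 0 < s := lt_trans ht0 hs.1
        rw [show (2:ℝ) = ((2:ℕ):ℝ) by norm_num, Real.rpow_natCast]
        simp only [v]
        rw [mul_pow, ← Real.rpow_natCast (s ^ ((2 - γ) / 2)) 2,
          ← Real.rpow_mul hs0.le, hDeq s (hsub' hs)]
        norm_num
      rw [e2]
      refine setIntegral_mono_set hgInt ?_ (HasSubset.Subset.eventuallyLE hsub')
      refine (ae_restrict_iff' measurableSet_Ioo).2 (.of_forall fun s hs => ?_)
      have : (0:ℝ) < s := hs.1
      positivity
    have hX0 : 0 ≤ ∫ s, u s ^ (2:ℝ) ∂μ' := by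
      refine integral_nonneg fun s => ?_
      rw [show (2:ℝ) = ((2:ℕ):ℝ) by norm_num, Real.rpow_natCast]
      positivity
    have hY0 : 0 ≤ ∫ s, v s ^ (2:ℝ) ∂μ' := by
      refine integral_nonneg fun s => ?_
      rw [show (2:ℝ) = ((2:ℕ):ℝ) by norm_num, Real.rpow_natCast]
      positivity
    have huv0 : 0 ≤ ∫ s, u s * v s ∂μ' :=
      le_trans (norm_nonneg _) (huv ▸ h1)
    calc ‖f (t + h) - f t‖ ^ 2 ≤ (∫ s, u s * v s ∂μ') ^ 2 :=
          pow_le_pow_left₀ (norm_nonneg _) (huv ▸ h1) 2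
      _ ≤ ((∫ s, u s ^ (2:ℝ) ∂μ') ^ ((1:ℝ)/2) * (∫ s, v s ^ (2:ℝ) ∂μ') ^ ((1:ℝ)/2)) ^ 2 :=
          pow_le_pow_left₀ huv0 hCS 2
      _ = (∫ s, u s ^ (2:ℝ) ∂μ') * (∫ s, v s ^ (2:ℝ) ∂μ') := by
          rw [mul_pow, ← Real.rpow_natCast ((∫ s, u s ^ (2:ℝ) ∂μ') ^ ((1:ℝ)/2)) 2,
            ← Real.rpow_natCast ((∫ s, v s ^ (2:ℝ) ∂μ') ^ ((1:ℝ)/2)) 2,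
            ← Real.rpow_mul hX0, ← Real.rpow_mul hY0]
          norm_num
      _ ≤ (t ^ (γ - 1) - (t + h) ^ (γ - 1)) / (1 - γ) * A := by
          rw [hX]
          exact mul_le_mul_of_nonneg_left hY (hX ▸ hX0)
  -- integrate the core bound in t
  have stepC : ∀ h ∈ Set.Ioo (0:ℝ) T,
      (∫ t in Set.Ioo (0:ℝ) (T - h), ‖f (t + h) - f t‖ ^ 2)
        ≤ h ^ γ * (A / (γ * (1 - γ))) := by
    intro h hh
    obtain ⟨hh0, hhT⟩ := hh
    have hS0 : 0 < T - h := by linarith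
    have hii1 : IntervalIntegrable (fun t : ℝ => t ^ (γ - 1)) volume 0 (T - h) :=
      intervalIntegral.intervalIntegrable_rpow' (by linarith)
    have hii2 : IntervalIntegrable (fun t : ℝ => (t + h) ^ (γ - 1)) volume 0 (T - h) := by
      refine ContinuousOn.intervalIntegrable fun s hs => ?_
      rw [Set.uIcc_of_le hS0.le] at hs
      have hsh : (0:ℝ) < s + h := by have := hs.1; linarith
      exact (((continuousAt_id.add continuousAt_const).rpow_const
        (Or.inl hsh.ne')).continuousWithinAt)
    have hWint : IntegrableOn
        (fun t => (t ^ (γ - 1) - (t + h) ^ (γ - 1)) / (1 - γ) * A)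
        (Set.Ioo 0 (T - h)) := by
      have := ((hii1.sub hii2).div_const (1 - γ)).mul_const A
      exact ((intervalIntegrable_iff_integrableOn_Ioc_of_le hS0.le).1 this).mono_set
        Set.Ioo_subset_Ioc_self
    have hmono := integral_mono_of_nonneg
      (f := fun t => ‖f (t + h) - f t‖ ^ 2)
      (μ := volume.restrict (Set.Ioo 0 (T - h)))
      (Filter.Eventually.of_forall fun t => by positivity) hWint
      ((ae_restrict_iff' measurableSet_Ioo).2
        (.of_forall fun t ht => core h ⟨hh0, hhT⟩ t ht))
    refine hmono.trans ?_
    have hval : ∫ t in Set.Ioo (0:ℝ) (T - h),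
        (t ^ (γ - 1) - (t + h) ^ (γ - 1)) / (1 - γ) * A
        = ((T - h) ^ γ - ((T - h + h) ^ γ - h ^ γ)) / γ / (1 - γ) * A := by
      rw [← integral_Ioc_eq_integral_Ioo, ← intervalIntegral.integral_of_le hS0.le,
        intervalIntegral.integral_mul_const, intervalIntegral.integral_div,
        intervalIntegral.integral_sub hii1 hii2,
        integral_rpow (Or.inl (by linarith)),
        intervalIntegral.integral_comp_add_right (fun s => s ^ (γ - 1)) h,
        zero_add, integral_rpow (Or.inl (by linarith)),
        show γ - 1 + 1 = γ by ring, Real.zero_rpow (ne_of_gt hγ0)]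
      ring
    rw [hval]
    have hmono2 : (T - h) ^ γ ≤ (T - h + h) ^ γ :=
      Real.rpow_le_rpow hS0.le (by linarith) hγ0.le
    have hkey : (T - h) ^ γ - ((T - h + h) ^ γ - h ^ γ) ≤ h ^ γ := by linarith
    calc ((T - h) ^ γ - ((T - h + h) ^ γ - h ^ γ)) / γ / (1 - γ) * A
        ≤ h ^ γ / γ / (1 - γ) * A := by gcongr <;> linarith
      _ = h ^ γ * (A / (γ * (1 - γ))) := by
          field_simp
  -- integrate in h
  have hbii : IntervalIntegrable (fun h : ℝ => h ^ (2 * α + γ - 2) * (A / (γ * (1 - γ))))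
      volume 0 T :=
    (intervalIntegral.intervalIntegrable_rpow' (by linarith)).mul_const _
  have hbInt : IntegrableOn
      (fun h : ℝ => h ^ (2 * α + γ - 2) * (A / (γ * (1 - γ)))) (Set.Ioo 0 T) :=
    ((intervalIntegrable_iff_integrableOn_Ioc_of_le hT.le).1 hbii).mono_set
      Set.Ioo_subset_Ioc_self
  have hnonneg : 0 ≤ᵐ[volume.restrict (Set.Ioo (0:ℝ) T)]
      fun h => h ^ (2 * α - 2) * ∫ t in Set.Ioo (0:ℝ) (T - h), ‖f (t + h) - f t‖ ^ 2 := by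
    refine (ae_restrict_iff' measurableSet_Ioo).2 (.of_forall fun h hh => ?_)
    have hh0 : (0:ℝ) < h := hh.1
    have hI0 : 0 ≤ ∫ t in Set.Ioo (0:ℝ) (T - h), ‖f (t + h) - f t‖ ^ 2 :=
      integral_nonneg fun t => by positivity
    positivity
  have hle : (fun h => h ^ (2 * α - 2) *
        ∫ t in Set.Ioo (0:ℝ) (T - h), ‖f (t + h) - f t‖ ^ 2)
      ≤ᵐ[volume.restrict (Set.Ioo (0:ℝ) T)]
      fun h : ℝ => h ^ (2 * α + γ - 2) * (A / (γ * (1 - γ))) := by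
    refine (ae_restrict_iff' measurableSet_Ioo).2 (.of_forall fun h hh => ?_)
    have hh0 : (0:ℝ) < h := hh.1
    have h6 : h ^ (2 * α - 2) * ∫ t in Set.Ioo (0:ℝ) (T - h), ‖f (t + h) - f t‖ ^ 2
        ≤ h ^ (2 * α - 2) * (h ^ γ * (A / (γ * (1 - γ)))) :=
      mul_le_mul_of_nonneg_left (stepC h hh) (Real.rpow_nonneg hh0.le _)
    refine h6.trans (le_of_eq ?_)
    rw [← mul_assoc, ← Real.rpow_add hh0, show 2 * α - 2 + γ = 2 * α + γ - 2 by ring]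
  refine (integral_mono_of_nonneg hnonneg hbInt hle).trans (le_of_eq ?_)
  rw [← integral_Ioc_eq_integral_Ioo, ← intervalIntegral.integral_of_le hT.le,
    intervalIntegral.integral_mul_const, integral_rpow (Or.inl (by linarith)),
    show 2 * α + γ - 2 + 1 = 2 * α + γ - 1 by ring, Real.zero_rpow (ne_of_gt hβ)]
  ring
end

section
/- Let a:𝕋²→[0,∞) be an integrable function which is not almost everywhere zero, and set M = (1/|𝕋²|) ∫_{𝕋²} a(x) dx. Then for every continuously differentiable function f:𝕋²→ℝ with a ∈ L²(𝕋²), one has ‖f‖_{L²(𝕋²)} ≤ (1/M) |∫_{𝕋²} a(x) f(x) dx| + (1 + ‖M − a‖_{L²(𝕋²)}/M) ‖∇f‖_{L²(𝕋²)}. -/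
open MeasureTheory

/-- Partial derivative `∂ᵢ f` of a scalar function on `ℝ²`. -/
noncomputable def pd (f : (Fin 2 → ℝ) → ℝ) (i : Fin 2) (x : Fin 2 → ℝ) : ℝ :=
  fderiv ℝ f x (Pi.single i 1)

/-- A function on `ℝ²` is `ℤ²`-periodic, i.e. descends to the torus `𝕋² = (ℝ/ℤ)²`. -/
def Per (f : (Fin 2 → ℝ) → ℝ) : Prop :=
  ∀ (x : Fin 2 → ℝ) (k : Fin 2 → ℤ), f (x + fun i => (k i : ℝ)) = f x

/-- The fundamental domain of the torus `𝕋² = (ℝ/ℤ)²`. -/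
def T2 : Set (Fin 2 → ℝ) := Set.Icc 0 1


lemma integral_mul_sq_le {α : Type*} [MeasurableSpace α] (μ : Measure α) (u v : α → ℝ)
    (hu : Integrable (fun x => u x ^ 2) μ) (hv : Integrable (fun x => v x ^ 2) μ)
    (huv : Integrable (fun x => u x * v x) μ) :
    (∫ x, u x * v x ∂μ) ^ 2 ≤ (∫ x, u x ^ 2 ∂μ) * (∫ x, v x ^ 2 ∂μ) := by
  have key : ∀ t : ℝ, 0 ≤ (∫ x, u x ^ 2 ∂μ) * (t * t)
      + (2 * ∫ x, u x * v x ∂μ) * t + (∫ x, v x ^ 2 ∂μ) := by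
    intro t
    have h1 : ∀ x, (t * u x + v x) ^ 2 = (t * t) * u x ^ 2 + t * (2 * (u x * v x)) + v x ^ 2 := by
      intro x; ring
    have h2 : 0 ≤ ∫ x, (t * u x + v x) ^ 2 ∂μ :=
      integral_nonneg fun x => sq_nonneg _
    calc (0:ℝ) ≤ ∫ x, (t * u x + v x) ^ 2 ∂μ := h2
      _ = ∫ x, ((t * t) * u x ^ 2 + t * (2 * (u x * v x)) + v x ^ 2) ∂μ := by
          simp_rw [h1]
      _ = (t*t) * (∫ x, u x ^ 2 ∂μ) + t * (2 * ∫ x, u x * v x ∂μ) + ∫ x, v x ^ 2 ∂μ := by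
          have i1 : Integrable (fun x => (t*t) * u x ^ 2) μ := hu.const_mul _
          have i2 : Integrable (fun x => t * (2 * (u x * v x))) μ :=
            (huv.const_mul 2).const_mul t
          have i12 : Integrable (fun x => (t*t) * u x ^ 2 + t * (2 * (u x * v x))) μ := by
            exact i1.add i2
          rw [integral_add i12 hv, integral_add i1 i2,
            integral_const_mul, integral_const_mul, integral_const_mul]
      _ = _ := by ring
  have hd := discrim_le_zero key
  rw [discrim] at hd
  nlinarith [hd]

lemma abs_integral_mul_le {α : Type*} [MeasurableSpace α] (μ : Measure α) (u v : α → ℝ)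
    (hu : Integrable (fun x => u x ^ 2) μ) (hv : Integrable (fun x => v x ^ 2) μ)
    (huv : Integrable (fun x => u x * v x) μ) :
    |∫ x, u x * v x ∂μ| ≤ Real.sqrt (∫ x, u x ^ 2 ∂μ) * Real.sqrt (∫ x, v x ^ 2 ∂μ) := by
  have h := integral_mul_sq_le μ u v hu hv huv
  have ha : 0 ≤ ∫ x, u x ^ 2 ∂μ := integral_nonneg fun x => sq_nonneg _
  have := Real.sqrt_le_sqrt h
  rwa [Real.sqrt_sq_eq_abs, Real.sqrt_mul ha] at this
noncomputable section

def S1 : Set ℝ := Set.Icc 0 1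

lemma volS1 : volume S1 = 1 := by simp [S1]

lemma S1meas : MeasurableSet S1 := measurableSet_Icc

lemma S1compact : IsCompact S1 := isCompact_Icc

lemma intconstS1 (c : ℝ) : IntegrableOn (fun _ : ℝ => c) S1 :=
  integrableOn_const (by rw [volS1]; exact ENNReal.one_ne_top)

lemma intcontS1 {v : ℝ → ℝ} (h : Continuous v) : IntegrableOn v S1 :=
  h.continuousOn.integrableOn_compact S1compact

lemma intconstS1' (c : ℝ) : ∫ (_ : ℝ) in S1, c = c := by
  rw [setIntegral_const, measureReal_def, volS1]; simp

lemma poincare1 (u u' : ℝ → ℝ) (hu : ∀ x, HasDerivAt u (u' x) x)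
    (h1 : IntegrableOn u' S1) (h2 : IntegrableOn (fun x => u' x ^ 2) S1) :
    ∫ x in S1, (u x - ∫ y in S1, u y) ^ 2 ≤ ∫ x in S1, u' x ^ 2 := by
  have hucont : Continuous u :=
    continuous_iff_continuousAt.2 fun x => (hu x).continuousAt
  have huint : IntegrableOn u S1 := intcontS1 hucont
  have habs : IntegrableOn (fun x => |u' x|) S1 := h1.abs
  set m : ℝ := ∫ y in S1, u y with hm
  set D : ℝ := ∫ y in S1, |u' y| with hD
  -- pointwise: for x y in S1, |u x - u y| ≤ D
  have key : ∀ x ∈ S1, ∀ y ∈ S1, |u x - u y| ≤ D := by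
    intro x hx y hy
    have hsub : Set.uIcc y x ⊆ S1 := Set.uIcc_subset_Icc hy hx
    have hii : IntervalIntegrable u' volume y x :=
      MeasureTheory.IntegrableOn.intervalIntegrable (h1.mono_set hsub)
    have hftc : ∫ t in y..x, u' t = u x - u y :=
      intervalIntegral.integral_eq_sub_of_hasDerivAt (fun t _ => hu t) hii
    rw [← hftc]
    calc |∫ t in y..x, u' t| ≤ ∫ t in Set.uIoc y x, |u' t| := by
          simpa [Real.norm_eq_abs] using
            intervalIntegral.norm_integral_le_integral_norm_uIoc (f := u') (a := y) (b := x)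
              (μ := volume)
      _ ≤ D := by
          apply setIntegral_mono_set habs
          · exact Filter.Eventually.of_forall fun t => abs_nonneg _
          · exact HasSubset.Subset.eventuallyLE ((Set.uIoc_subset_uIcc).trans hsub)
  -- pointwise: for x in S1, |u x - m| ≤ D
  have key2 : ∀ x ∈ S1, |u x - m| ≤ D := by
    intro x hx
    have : u x - m = ∫ y in S1, (u x - u y) := by
      rw [integral_sub (intconstS1 (u x)) huint, intconstS1' (u x)]
    rw [this]
    calc |∫ y in S1, (u x - u y)| ≤ ∫ y in S1, |u x - u y| := by
          simpa [Real.norm_eq_abs] using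
            norm_integral_le_integral_norm (μ := volume.restrict S1) (fun y => u x - u y)
      _ ≤ ∫ (_ : ℝ) in S1, D := by
          apply setIntegral_mono_on
          · exact intcontS1 ((continuous_const.sub hucont).abs)
          · exact intconstS1 D
          · exact S1meas
          · exact fun y hy => key x hx y hy
      _ = D := intconstS1' D
  -- ∫ (u - m)^2 ≤ D^2
  have step2 : ∫ x in S1, (u x - m) ^ 2 ≤ D ^ 2 := by
    calc ∫ x in S1, (u x - m) ^ 2 ≤ ∫ (_ : ℝ) in S1, D ^ 2 := by
          apply setIntegral_mono_on
          · exact intcontS1 ((hucont.sub continuous_const).pow 2)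
          · exact intconstS1 _
          · exact S1meas
          · intro x hx
            rw [← sq_abs]
            exact pow_le_pow_left₀ (abs_nonneg _) (key2 x hx) 2
      _ = D ^ 2 := intconstS1' _
  -- D^2 ≤ ∫ u'^2 by Cauchy-Schwarz with v = 1
  have step3 : D ^ 2 ≤ ∫ x in S1, u' x ^ 2 := by
    have habs2 : IntegrableOn (fun x => |u' x| ^ 2) S1 := by
      simpa [sq_abs] using h2
    have hone : Integrable (fun _ : ℝ => (1:ℝ) ^ 2) (volume.restrict S1) := by
      simp only [one_pow]; exact intconstS1 1
    have hprod : Integrable (fun x => |u' x| * 1) (volume.restrict S1) := by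
      simpa using habs.integrable
    have hcs := integral_mul_sq_le (volume.restrict S1) (fun x => |u' x|) (fun _ => 1)
      habs2 hone hprod
    simp only [mul_one, one_pow, sq_abs] at hcs
    calc D ^ 2 ≤ (∫ x in S1, u' x ^ 2) * ∫ (_ : ℝ) in S1, (1:ℝ) := hcs
      _ = ∫ x in S1, u' x ^ 2 := by rw [intconstS1' 1, mul_one]
  linarith

end
noncomputable section
open Metric in
lemma poincare2 (F F₁ F₂ : ℝ × ℝ → ℝ)
    (hF1 : ∀ p : ℝ × ℝ, HasDerivAt (fun x => F (x, p.2)) (F₁ p) p.1)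
    (hF2 : ∀ p : ℝ × ℝ, HasDerivAt (fun y => F (p.1, y)) (F₂ p) p.2)
    (hFc : Continuous F) (h1c : Continuous F₁) (h2c : Continuous F₂) :
    ∫ p, (F p - ∫ q, F q ∂((volume.restrict S1).prod (volume.restrict S1))) ^ 2
        ∂((volume.restrict S1).prod (volume.restrict S1))
      ≤ ∫ p, (F₁ p ^ 2 + F₂ p ^ 2) ∂((volume.restrict S1).prod (volume.restrict S1)) := by
  set μ : Measure ℝ := volume.restrict S1 with hμ
  have hprodeq : μ.prod μ = (volume.prod volume).restrict (S1 ×ˢ S1) :=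
    Measure.prod_restrict S1 S1
  have intc : ∀ {φ : ℝ × ℝ → ℝ}, Continuous φ → Integrable φ (μ.prod μ) := by
    intro φ hφ
    rw [hprodeq]
    exact hφ.continuousOn.integrableOn_compact (S1compact.prod S1compact)
  have intcμ : ∀ {v : ℝ → ℝ}, Continuous v → Integrable v μ := fun h => intcontS1 h
  have intconstμ : ∀ c : ℝ, ∫ (_ : ℝ), c ∂μ = c := fun c => intconstS1' c
  -- slice mean g and its derivative G
  set g : ℝ → ℝ := fun y => ∫ x, F (x, y) ∂μ with hgdef
  set G : ℝ → ℝ := fun y => ∫ x, F₂ (x, y) ∂μ with hGdef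
  have hg : ∀ y : ℝ, HasDerivAt g (G y) y := by
    intro y₀
    have hK : IsCompact (S1 ×ˢ Set.Icc (y₀ - 1) (y₀ + 1)) :=
      S1compact.prod isCompact_Icc
    obtain ⟨C, hC⟩ := hK.exists_bound_of_continuousOn h2c.continuousOn
    have main := hasDerivAt_integral_of_dominated_loc_of_deriv_le (μ := μ)
      (F := fun y a => F (a, y)) (F' := fun y a => F₂ (a, y)) (x₀ := y₀)
      (bound := fun _ => C) (s := Metric.ball y₀ 1) (Metric.ball_mem_nhds y₀ one_pos)
      (Filter.Eventually.of_forall fun y =>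
        (hFc.comp (continuous_id.prodMk continuous_const)).aestronglyMeasurable)
      (intcμ (hFc.comp (continuous_id.prodMk continuous_const)))
      ((h2c.comp (continuous_id.prodMk continuous_const)).aestronglyMeasurable)
      ?_ (intconstS1 C) ?_
    · exact main.2
    · filter_upwards [ae_restrict_mem S1meas] with a ha
      intro y hy
      apply hC
      refine ⟨ha, ?_⟩
      have hb := mem_ball_iff_norm.1 hy
      rw [Real.norm_eq_abs, abs_sub_lt_iff] at hb
      exact ⟨by linarith [hb.1, hb.2], by linarith [hb.1, hb.2]⟩
    · filter_upwards with a
      intro y _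
      exact hF2 (a, y)
  have hgc : Continuous g := continuous_iff_continuousAt.2 fun y => (hg y).continuousAt
  -- bound and integrability for G
  obtain ⟨C₃, hC₃⟩ := (S1compact.prod S1compact).exists_bound_of_continuousOn h2c.continuousOn
  have hGsm : StronglyMeasurable G :=
    StronglyMeasurable.integral_prod_left (f := fun x y => F₂ (x, y)) h2c.stronglyMeasurable
  have hGbdd : ∀ y ∈ S1, |G y| ≤ C₃ := by
    intro y hy
    calc |G y| ≤ ∫ x, |F₂ (x, y)| ∂μ := by
          simpa [Real.norm_eq_abs] using
            norm_integral_le_integral_norm (μ := μ) (fun x => F₂ (x, y))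
      _ ≤ ∫ (_ : ℝ), C₃ ∂μ := by
          apply setIntegral_mono_on
          · exact intcμ ((h2c.comp (continuous_id.prodMk continuous_const)).abs)
          · exact intconstS1 C₃
          · exact S1meas
          · intro x hx
            simpa [Real.norm_eq_abs] using hC₃ (x, y) ⟨hx, hy⟩
      _ = C₃ := intconstμ C₃
  have hGint : Integrable G μ := by
    apply Integrable.mono' (intconstS1 C₃) hGsm.aestronglyMeasurable
    filter_upwards [ae_restrict_mem S1meas] with y hy
    simpa [Real.norm_eq_abs] using hGbdd y hy
  have hGsq_int : Integrable (fun y => G y ^ 2) μ := by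
    apply Integrable.mono' (intconstS1 (C₃ ^ 2))
      (by exact (hGsm.pow 2).aestronglyMeasurable :
        AEStronglyMeasurable (fun y => G y ^ 2) μ)
    filter_upwards [ae_restrict_mem S1meas] with y hy
    rw [Real.norm_eq_abs, abs_pow]
    exact pow_le_pow_left₀ (abs_nonneg _) (hGbdd y hy) 2
  -- pointwise Cauchy-Schwarz for G
  have hCSy : ∀ y : ℝ, G y ^ 2 ≤ ∫ x, F₂ (x, y) ^ 2 ∂μ := by
    intro y
    have hcs := integral_mul_sq_le μ (fun x => F₂ (x, y)) (fun _ => 1)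
      (intcμ ((h2c.pow 2).comp (continuous_id.prodMk continuous_const)))
      (by simp only [one_pow]; exact intconstS1 1)
      (by simpa using (intcμ (h2c.comp (continuous_id.prodMk continuous_const)) :
        Integrable (fun x => F₂ (x, y)) μ))
    simp only [mul_one, one_pow, intconstμ] at hcs
    simpa using hcs
  -- the global mean
  set c : ℝ := ∫ y, g y ∂μ with hcdef
  have hcF : ∫ q, F q ∂(μ.prod μ) = c := integral_prod_symm F (intc hFc)
  -- continuity helpers
  have hgsnd : Continuous (fun p : ℝ × ℝ => g p.2) := hgc.comp continuous_snd
  have hh1 : Continuous (fun p : ℝ × ℝ => F p - g p.2) := hFc.sub hgsnd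
  have hh2 : Continuous (fun p : ℝ × ℝ => g p.2 - c) := hgsnd.sub continuous_const
  -- decomposition
  have hdecomp : ∫ p, (F p - c) ^ 2 ∂(μ.prod μ)
      = (∫ p, (F p - g p.2) ^ 2 ∂(μ.prod μ))
        + (2 * ∫ p, (F p - g p.2) * (g p.2 - c) ∂(μ.prod μ))
        + ∫ p, (g p.2 - c) ^ 2 ∂(μ.prod μ) := by
    have hpt : ∀ p : ℝ × ℝ, (F p - c) ^ 2
        = ((F p - g p.2) ^ 2 + 2 * ((F p - g p.2) * (g p.2 - c))) + (g p.2 - c) ^ 2 := by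
      intro p; ring
    simp_rw [hpt]
    have i1 : Integrable (fun p : ℝ × ℝ => (F p - g p.2) ^ 2) (μ.prod μ) := intc (hh1.pow 2)
    have i2 : Integrable (fun p : ℝ × ℝ => 2 * ((F p - g p.2) * (g p.2 - c))) (μ.prod μ) :=
      (intc (hh1.mul hh2)).const_mul 2
    have i3 : Integrable (fun p : ℝ × ℝ => (g p.2 - c) ^ 2) (μ.prod μ) := intc (hh2.pow 2)
    have i12 : Integrable (fun p : ℝ × ℝ =>
        (F p - g p.2) ^ 2 + 2 * ((F p - g p.2) * (g p.2 - c))) (μ.prod μ) := by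
      exact i1.add i2
    rw [integral_add i12 i3, integral_add i1 i2, integral_const_mul]
  -- cross term vanishes
  have hcross : ∫ p, (F p - g p.2) * (g p.2 - c) ∂(μ.prod μ) = 0 := by
    rw [integral_prod_symm (fun p => (F p - g p.2) * (g p.2 - c)) (intc (hh1.mul hh2))]
    have hz : ∀ y : ℝ, ∫ x, (F (x, y) - g y) * (g y - c) ∂μ = 0 := by
      intro y
      rw [integral_mul_const]
      have hz0 : ∫ x, (F (x, y) - g y) ∂μ = 0 := by
        rw [integral_sub
          (by exact intcμ (hFc.comp (continuous_id.prodMk continuous_const)) :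
            Integrable (fun x => F (x, y)) μ)
          (by exact intcμ continuous_const : Integrable (fun _ : ℝ => g y) μ),
          intconstμ, hgdef, sub_self]
      rw [hz0, zero_mul]
    simp_rw [hz]
    exact integral_zero _ _
  -- first term
  have hterm1 : ∫ p, (F p - g p.2) ^ 2 ∂(μ.prod μ) ≤ ∫ p, F₁ p ^ 2 ∂(μ.prod μ) := by
    rw [integral_prod_symm (fun p => (F p - g p.2) ^ 2) (intc (hh1.pow 2)),
      integral_prod_symm (fun p => F₁ p ^ 2) (intc (h1c.pow 2))]
    apply integral_mono
    · exact (intc (hh1.pow 2)).integral_prod_right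
    · exact (intc (h1c.pow 2)).integral_prod_right
    · intro y
      exact poincare1 (fun x => F (x, y)) (fun x => F₁ (x, y)) (fun x => hF1 (x, y))
        (intcontS1 (h1c.comp (continuous_id.prodMk continuous_const)))
        (intcontS1 ((h1c.pow 2).comp (continuous_id.prodMk continuous_const)))
  -- third term
  have hterm3 : ∫ p, (g p.2 - c) ^ 2 ∂(μ.prod μ) ≤ ∫ p, F₂ p ^ 2 ∂(μ.prod μ) := by
    have e1 : ∫ p, (g p.2 - c) ^ 2 ∂(μ.prod μ) = ∫ y, (g y - c) ^ 2 ∂μ := by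
      rw [integral_prod_symm (fun p => (g p.2 - c) ^ 2) (intc (hh2.pow 2))]
      simp_rw [intconstμ]
    have e2 : ∫ y, (g y - c) ^ 2 ∂μ ≤ ∫ y, G y ^ 2 ∂μ :=
      poincare1 g G hg hGint hGsq_int
    have e3 : ∫ y, G y ^ 2 ∂μ ≤ ∫ y, (∫ x, F₂ (x, y) ^ 2 ∂μ) ∂μ :=
      integral_mono hGsq_int ((intc (h2c.pow 2)).integral_prod_right) hCSy
    have e4 : ∫ y, (∫ x, F₂ (x, y) ^ 2 ∂μ) ∂μ = ∫ p, F₂ p ^ 2 ∂(μ.prod μ) :=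
      (integral_prod_symm _ (intc (h2c.pow 2))).symm
    linarith
  have hsum : ∫ p, (F₁ p ^ 2 + F₂ p ^ 2) ∂(μ.prod μ)
      = (∫ p, F₁ p ^ 2 ∂(μ.prod μ)) + ∫ p, F₂ p ^ 2 ∂(μ.prod μ) :=
    integral_add (intc (h1c.pow 2)) (intc (h2c.pow 2))
  rw [hcF, hdecomp, hcross, hsum]
  linarith
end
noncomputable section

abbrev e2 : (Fin 2 → ℝ) ≃ᵐ ℝ × ℝ := MeasurableEquiv.finTwoArrow

lemma hpre : e2 ⁻¹' (S1 ×ˢ S1) = T2 := by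
  ext x
  have hx : (e2 x : ℝ × ℝ) = (x 0, x 1) := by simp [MeasurableEquiv.finTwoArrow]
  simp only [Set.mem_preimage, hx, Set.mem_prod, S1, T2, Set.mem_Icc, Pi.le_def,
    Fin.forall_fin_two, Pi.zero_apply, Pi.one_apply]
  tauto

lemma hι : Continuous (fun p : ℝ × ℝ => (e2.symm p : Fin 2 → ℝ)) := by
  apply continuous_pi; intro i; fin_cases i
  · simpa [MeasurableEquiv.finTwoArrow] using continuous_fst
  · simpa [MeasurableEquiv.finTwoArrow] using continuous_snd

lemma transfer (φ : (Fin 2 → ℝ) → ℝ) :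
    ∫ x in T2, φ x
      = ∫ p, φ (e2.symm p) ∂((volume.restrict S1).prod (volume.restrict S1)) := by
  rw [Measure.prod_restrict, ← Measure.volume_eq_prod ℝ ℝ]
  rw [← MeasurePreserving.setIntegral_preimage_emb (volume_preserving_finTwoArrow ℝ)
    (MeasurableEquiv.measurableEmbedding _) (fun p => φ (e2.symm p)) (S1 ×ˢ S1)]
  rw [hpre]
  apply setIntegral_congr_fun (by exact measurableSet_Icc)
  intro x _
  exact congrArg φ (e2.symm_apply_apply x).symm

lemma hL1 (y : ℝ) (x₀ : ℝ) :
    HasDerivAt (fun t : ℝ => (e2.symm (t, y) : Fin 2 → ℝ)) (Pi.single 0 1) x₀ := by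
  rw [hasDerivAt_pi]
  intro i; fin_cases i
  · simpa [MeasurableEquiv.finTwoArrow] using hasDerivAt_id' x₀
  · simpa [MeasurableEquiv.finTwoArrow, Pi.single_eq_of_ne] using hasDerivAt_const x₀ y

lemma hL2 (x : ℝ) (y₀ : ℝ) :
    HasDerivAt (fun t : ℝ => (e2.symm (x, t) : Fin 2 → ℝ)) (Pi.single 1 1) y₀ := by
  rw [hasDerivAt_pi]
  intro i; fin_cases i
  · simpa [MeasurableEquiv.finTwoArrow, Pi.single_eq_of_ne] using hasDerivAt_const y₀ x
  · simpa [MeasurableEquiv.finTwoArrow] using hasDerivAt_id' y₀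

end

/-- Poincaré-type inequality on the torus with a nonnegative
weight `a` that is not almost everywhere zero, where
`M = (1/|𝕋²|) ∫_{𝕋²} a dx`. -/
theorem weighted_poincare_on_torus
    (a f : (Fin 2 → ℝ) → ℝ) (M : ℝ)
    (haper : Per a) (hfper : Per f)
    (hameas : Measurable a) (hanonneg : ∀ x, 0 ≤ a x)
    (haint : IntegrableOn a T2)
    (haL2 : IntegrableOn (fun x => (a x) ^ 2) T2)
    (hane : ¬ (∀ᵐ x ∂(volume.restrict T2), a x = 0))
    (hf : ContDiff ℝ 1 f)
    (hM : M = (∫ x in T2, a x) / (volume T2).toReal) :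
    Real.sqrt (∫ x in T2, (f x) ^ 2)
      ≤ (1 / M) * |∫ x in T2, a x * f x|
        + (1 + Real.sqrt (∫ x in T2, (M - a x) ^ 2) / M)
          * Real.sqrt (∫ x in T2, ∑ i, (pd f i x) ^ 2) := by
  classical
  have hvol : volume T2 = 1 := by
    rw [T2, Real.volume_Icc_pi]
    simp
  have hvolR : (volume T2).toReal = 1 := by rw [hvol]; simp
  have hM' : M = ∫ x in T2, a x := by rw [hM, hvolR, div_one]
  have T2meas : MeasurableSet T2 := by exact measurableSet_Icc
  have T2compact : IsCompact T2 := by exact isCompact_Icc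
  have intconstT2 : ∀ c : ℝ, IntegrableOn (fun _ : (Fin 2 → ℝ) => c) T2 :=
    fun c => integrableOn_const (by rw [hvol]; exact ENNReal.one_ne_top)
  have intconstT2' : ∀ c : ℝ, (∫ (_ : Fin 2 → ℝ) in T2, c) = c := by
    intro c; rw [setIntegral_const, measureReal_def, hvolR]; simp
  have intcontT2 : ∀ {v : (Fin 2 → ℝ) → ℝ}, Continuous v → IntegrableOn v T2 :=
    fun h => h.continuousOn.integrableOn_compact T2compact
  have fc : Continuous f := hf.continuous
  -- M is positive
  have hMpos : 0 < M := by
    rw [hM']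
    have hnn : 0 ≤ ∫ x in T2, a x := setIntegral_nonneg T2meas (fun x _ => hanonneg x)
    rcases hnn.lt_or_eq with h | h
    · exact h
    · exfalso
      apply hane
      have h0 := (integral_eq_zero_iff_of_nonneg (fun x => hanonneg x) haint).1 h.symm
      filter_upwards [h0] with x hx
      simpa using hx
  set m : ℝ := ∫ x in T2, f x with hmdef
  obtain ⟨Cf, hCf⟩ := T2compact.exists_bound_of_continuousOn fc.continuousOn
  -- integrability facts
  have hfint : IntegrableOn f T2 := intcontT2 fc
  have hfsq : IntegrableOn (fun x => f x ^ 2) T2 := intcontT2 (fc.pow 2)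
  have hfmsq : IntegrableOn (fun x => (f x - m) ^ 2) T2 :=
    intcontT2 ((fc.sub continuous_const).pow 2)
  have hafint : IntegrableOn (fun x => a x * f x) T2 := by
    apply Integrable.mono' (haint.const_mul Cf)
      ((hameas.mul fc.measurable).aestronglyMeasurable)
    filter_upwards [ae_restrict_mem T2meas] with x hx
    rw [Real.norm_eq_abs, Pi.mul_apply, abs_mul]
    calc |a x| * |f x| = a x * |f x| := by rw [abs_of_nonneg (hanonneg x)]
      _ ≤ a x * Cf := mul_le_mul_of_nonneg_left
          (by simpa [Real.norm_eq_abs] using hCf x hx) (hanonneg x)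
      _ = Cf * a x := mul_comm _ _
  have hamsq : IntegrableOn (fun x => (a x - M) ^ 2) T2 := by
    have hrw : (fun x => (a x - M) ^ 2)
        = fun x => (a x ^ 2 - (2 * M) * a x) + M ^ 2 := funext fun x => by ring
    rw [hrw]
    exact (haL2.sub (haint.const_mul (2 * M))).add (intconstT2 (M ^ 2))
  have hamfm : IntegrableOn (fun x => (a x - M) * (f x - m)) T2 := by
    apply Integrable.mono' ((haint.add (intconstT2 |M|)).const_mul (Cf + |m|))
      (((hameas.sub measurable_const).mul
        (fc.measurable.sub measurable_const)).aestronglyMeasurable)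
    filter_upwards [ae_restrict_mem T2meas] with x hx
    rw [Real.norm_eq_abs, Pi.mul_apply, abs_mul]
    have h1 : |a x - M| ≤ a x + |M| := by
      calc |a x - M| ≤ |a x| + |M| := abs_sub _ _
        _ = a x + |M| := by rw [abs_of_nonneg (hanonneg x)]
    have h2 : |f x - m| ≤ Cf + |m| := by
      have hfx : |f x| ≤ Cf := by simpa [Real.norm_eq_abs] using hCf x hx
      calc |f x - m| ≤ |f x| + |m| := abs_sub _ _
        _ ≤ Cf + |m| := by linarith
    calc |a x - M| * |f x - m| ≤ (a x + |M|) * (Cf + |m|) :=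
          mul_le_mul h1 h2 (abs_nonneg _) (add_nonneg (hanonneg x) (abs_nonneg _))
      _ = (Cf + |m|) * (a x + |M|) := mul_comm _ _
  -- orthogonal decomposition of the mean
  have horth : ∫ x in T2, (f x - m) ^ 2 = (∫ x in T2, f x ^ 2) - m ^ 2 := by
    have hrw : (fun x => (f x - m) ^ 2)
        = fun x => (f x ^ 2 - (2 * m) * f x) + m ^ 2 := funext fun x => by ring
    have i1 : IntegrableOn (fun x => f x ^ 2 - (2 * m) * f x) T2 := by
      exact hfsq.sub (hfint.const_mul (2 * m))
    have i2 : IntegrableOn (fun x => (2 * m) * f x) T2 := by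
      exact hfint.const_mul (2 * m)
    rw [hrw, integral_add i1 (intconstT2 _),
      integral_sub hfsq i2, integral_const_mul, intconstT2', ← hmdef]
    ring
  -- weighted mean identity
  have hMm : ∫ x in T2, (a x - M) * (f x - m) = (∫ x in T2, a x * f x) - M * m := by
    have hrw : (fun x => (a x - M) * (f x - m))
        = fun x => ((a x * f x - m * a x) - M * f x) + M * m := funext fun x => by ring
    have j1 : IntegrableOn (fun x => m * a x) T2 := by exact haint.const_mul m
    have j2 : IntegrableOn (fun x => M * f x) T2 := by exact hfint.const_mul M
    have j3 : IntegrableOn (fun x => a x * f x - m * a x) T2 := by exact hafint.sub j1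
    have j4 : IntegrableOn (fun x => (a x * f x - m * a x) - M * f x) T2 := by
      exact j3.sub j2
    rw [hrw, integral_add j4 (intconstT2 _), integral_sub j3 j2, integral_sub hafint j1,
      integral_const_mul, integral_const_mul, intconstT2', ← hM', ← hmdef]
    ring
  -- Cauchy-Schwarz for the weighted part
  have hCS : |∫ x in T2, (a x - M) * (f x - m)|
      ≤ Real.sqrt (∫ x in T2, (M - a x) ^ 2) * Real.sqrt (∫ x in T2, (f x - m) ^ 2) := by
    have h := abs_integral_mul_le (volume.restrict T2) (fun x => a x - M)
      (fun x => f x - m) hamsq hfmsq hamfm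
    have hrw : (∫ x in T2, (a x - M) ^ 2) = ∫ x in T2, (M - a x) ^ 2 :=
      integral_congr_ae (Filter.Eventually.of_forall fun x => by ring)
    rwa [hrw] at h
  -- Poincaré inequality via transfer to ℝ × ℝ
  have hpoin : ∫ x in T2, (f x - m) ^ 2 ≤ ∫ x in T2, ∑ i, (pd f i x) ^ 2 := by
    have hdiff : Differentiable ℝ f := hf.differentiable one_ne_zero
    have hfdc : Continuous (fderiv ℝ f) := hf.continuous_fderiv one_ne_zero
    have hpdc : ∀ i : Fin 2, Continuous (pd f i) := fun i =>
      hfdc.clm_apply continuous_const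
    set F : ℝ × ℝ → ℝ := fun p => f (e2.symm p) with hFdef
    set F₁ : ℝ × ℝ → ℝ := fun p => pd f 0 (e2.symm p) with hF1def
    set F₂ : ℝ × ℝ → ℝ := fun p => pd f 1 (e2.symm p) with hF2def
    have hFc : Continuous F := fc.comp hι
    have h1c : Continuous F₁ := (hpdc 0).comp hι
    have h2c : Continuous F₂ := (hpdc 1).comp hι
    have hF1 : ∀ p : ℝ × ℝ, HasDerivAt (fun x => F (x, p.2)) (F₁ p) p.1 := by
      rintro ⟨x₀, y⟩
      exact (hdiff (e2.symm (x₀, y))).hasFDerivAt.comp_hasDerivAt x₀ (hL1 y x₀)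
    have hF2' : ∀ p : ℝ × ℝ, HasDerivAt (fun y => F (p.1, y)) (F₂ p) p.2 := by
      rintro ⟨x, y₀⟩
      exact (hdiff (e2.symm (x, y₀))).hasFDerivAt.comp_hasDerivAt y₀ (hL2 x y₀)
    have hmean : (∫ q, F q ∂((volume.restrict S1).prod (volume.restrict S1))) = m :=
      (transfer f).symm
    have htrans1 : ∫ x in T2, (f x - m) ^ 2
        = ∫ p, (F p - ∫ q, F q ∂((volume.restrict S1).prod (volume.restrict S1))) ^ 2
            ∂((volume.restrict S1).prod (volume.restrict S1)) := by
      rw [hmean]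
      exact transfer (fun x => (f x - m) ^ 2)
    have htrans2 : ∫ x in T2, ∑ i, (pd f i x) ^ 2
        = ∫ p, (F₁ p ^ 2 + F₂ p ^ 2)
            ∂((volume.restrict S1).prod (volume.restrict S1)) := by
      rw [transfer (fun x => ∑ i, (pd f i x) ^ 2)]
      apply integral_congr_ae
      filter_upwards with p
      rw [Fin.sum_univ_two]
    rw [htrans1, htrans2]
    exact poincare2 F F₁ F₂ hF1 hF2' hFc h1c h2c
  -- final arithmetic
  set A2 : ℝ := ∫ x in T2, (f x - m) ^ 2 with hA2def
  have hA2nn : 0 ≤ A2 := setIntegral_nonneg T2meas fun x _ => sq_nonneg _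
  set P2 : ℝ := ∫ x in T2, ∑ i, (pd f i x) ^ 2 with hP2def
  set N : ℝ := Real.sqrt (∫ x in T2, (M - a x) ^ 2) with hNdef
  set A : ℝ := Real.sqrt A2 with hAdef
  set P : ℝ := Real.sqrt P2 with hPdef
  set I : ℝ := |∫ x in T2, a x * f x| with hIdef
  have hAnn : 0 ≤ A := Real.sqrt_nonneg _
  have hNnn : 0 ≤ N := Real.sqrt_nonneg _
  have hPnn : 0 ≤ P := Real.sqrt_nonneg _
  have hInn : 0 ≤ I := abs_nonneg _
  have hAP : A ≤ P := Real.sqrt_le_sqrt hpoin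
  have hsq : Real.sqrt (∫ x in T2, f x ^ 2) ≤ A + |m| := by
    have h1 : (∫ x in T2, f x ^ 2) = A2 + m ^ 2 := by
      rw [horth]; ring
    rw [h1]
    have hAA : A ^ 2 = A2 := Real.sq_sqrt hA2nn
    have h2 : A2 + m ^ 2 ≤ (A + |m|) ^ 2 := by
      nlinarith [mul_nonneg hAnn (abs_nonneg m), sq_abs m]
    calc Real.sqrt (A2 + m ^ 2) ≤ Real.sqrt ((A + |m|) ^ 2) := Real.sqrt_le_sqrt h2
      _ = A + |m| := Real.sqrt_sq (by positivity)
  have hmbound : M * |m| ≤ I + N * A := by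
    have hid : M * m = (∫ x in T2, a x * f x) - ∫ x in T2, (a x - M) * (f x - m) := by
      linarith [hMm]
    calc M * |m| = |M * m| := by rw [abs_mul, abs_of_nonneg hMpos.le]
      _ = |(∫ x in T2, a x * f x) - ∫ x in T2, (a x - M) * (f x - m)| := by rw [hid]
      _ ≤ I + |∫ x in T2, (a x - M) * (f x - m)| := abs_sub _ _
      _ ≤ I + N * A := by linarith [hCS]
  have hfinal : M * Real.sqrt (∫ x in T2, f x ^ 2) ≤ I + (M + N) * P := by
    have h1 := mul_le_mul_of_nonneg_left hsq hMpos.le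
    have h2 := mul_le_mul_of_nonneg_left hAP (add_nonneg hMpos.le hNnn)
    nlinarith [mul_le_mul_of_nonneg_left hAP hNnn]
  have hrhs : (1 / M) * I + (1 + N / M) * P = (I + (M + N) * P) / M := by
    field_simp
  rw [hrhs, le_div_iff₀ hMpos]
  linarith [hfinal]
end
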